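/- Let G be a connected graph on n vertices in which every vertex has degree k₁ or k₂ with k₁ < k₂, such that: any two distinct non-adjacent vertices have exactly μ common neighbors; any two adjacent vertices of different degrees have exactly μ − 1 common neighbors; and k₁·k₂ + μ = n·μ. Suppose u, v are adjacent vertices with deg u = k₁, deg v = k₂, and every vertex w ∉ {u,v} is adjacent to at least one of u, v. Then k₁ = μ and k₂ = n − 1. -/

import Mathlib

open Finset

theorem stmt11 {V : Type*} [Fintype V] [DecidableEq V] (G : SimpleGraph V)
    [DecidableRel G.Adj] (hconn : G.Connected) (n k₁ k₂ μ : ℕ)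
    (hcard : Fintype.card V = n)
    (hdeg : ∀ w : V, G.degree w = k₁ ∨ G.degree w = k₂) (hks : k₁ < k₂)
    (hnonadj : ∀ x y : V, x ≠ y → ¬G.Adj x y →
      Fintype.card (G.commonNeighbors x y) = μ)
    (hadj12 : ∀ x y : V, G.Adj x y → G.degree x ≠ G.degree y →
      (Fintype.card (G.commonNeighbors x y) : ℤ) = (μ : ℤ) - 1)
    (hparam : k₁ * k₂ + μ = n * μ)
    (u v : V) (huv : G.Adj u v) (hu : G.degree u = k₁) (hv : G.degree v = k₂)
    (hdom : ∀ w : V, w ≠ u → w ≠ v → G.Adj u w ∨ G.Adj v w) :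
    k₁ = μ ∧ k₂ = n - 1 := by
  -- common neighbors count
  have hne : G.degree u ≠ G.degree v := by rw [hu, hv]; exact hks.ne
  have hc : (Fintype.card (G.commonNeighbors u v) : ℤ) = (μ : ℤ) - 1 :=
    hadj12 u v huv hne
  set c := Fintype.card (G.commonNeighbors u v) with hcdef
  -- c = card of intersection of neighbor finsets
  have hcount : (G.neighborFinset u ∩ G.neighborFinset v).card = c := by
    rw [hcdef, ← Set.toFinset_card]
    congr 1
    ext w
    rw [Set.mem_toFinset]
    simp [SimpleGraph.commonNeighbors, SimpleGraph.mem_neighborFinset]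
  -- union is everything
  have huniv : G.neighborFinset u ∪ G.neighborFinset v = Finset.univ := by
    apply Finset.eq_univ_of_forall
    intro w
    by_cases hwu : w = u
    · subst hwu
      exact Finset.mem_union.2 (Or.inr (by simp [huv.symm]))
    by_cases hwv : w = v
    · subst hwv
      exact Finset.mem_union.2 (Or.inl (by simp [huv]))
    rcases hdom w hwu hwv with h | h
    · exact Finset.mem_union.2 (Or.inl (by simp [h]))
    · exact Finset.mem_union.2 (Or.inr (by simp [h]))
  have hsum := Finset.card_union_add_card_inter (G.neighborFinset u) (G.neighborFinset v)
  rw [huniv, hcount, Finset.card_univ, hcard] at hsum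
  rw [SimpleGraph.card_neighborFinset_eq_degree, SimpleGraph.card_neighborFinset_eq_degree,
    hu, hv] at hsum
  -- n ≥ k₂ + 1 (degree bound)
  have hdegv : k₂ < n := by
    rw [← hv, ← hcard]; exact G.degree_lt_card_verts v
  -- pass to integers
  have hsumZ : (n : ℤ) + c = k₁ + k₂ := by exact_mod_cast hsum
  have hparamZ : (k₁ : ℤ) * k₂ + μ = n * μ := by exact_mod_cast hparam
  have hfac : ((k₁ : ℤ) - μ) * ((k₂ : ℤ) - μ) = 0 := by nlinarith [hc, hsumZ, hparamZ]
  rcases mul_eq_zero.1 hfac with h | h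
  · have h1 : (k₁ : ℤ) = μ := by linarith
    have hk1 : k₁ = μ := by exact_mod_cast h1
    constructor
    · exact hk1
    · have : (k₂ : ℤ) = n - 1 := by linarith [hc, hsumZ]
      omega
  · exfalso
    have h2 : (k₂ : ℤ) = μ := by linarith
    have : (k₁ : ℤ) = n - 1 := by linarith [hc, hsumZ]
    have : (k₂ : ℤ) < n := by exact_mod_cast hdegv
    have : (k₁ : ℤ) < k₂ := by exact_mod_cast hks
    omega
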